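/- Let u_a, u_b, u_c : [0,T] → ℝ be locally integrable functions and let ξ : [0,T] → ℝ be absolutely continuous with ξ(0) = 0 and ξ′(t) = u_a(t) + 2u_b(t)ξ(t) − u_c(t)ξ(t)² for almost every t (a particular solution of the Riccati equation). Set F(t) := exp(2∫₀^t (u_b(s) − u_c(s)ξ(s)) ds) and G(t) := ∫₀^t u_c(s)F(s) ds. Then for every y₀ ∈ ℝ and every T′ ∈ (0,T] such that 1 + y₀·G(t) ≠ 0 for all t ∈ [0,T′], the function y(t) := ξ(t) + y₀·F(t)/(1 + y₀·G(t)) is absolutely continuous on [0,T′], satisfies y(0) = y₀, and y′(t) = u_a(t) + 2u_b(t)·y(t) − u_c(t)·y(t)² for almost every t ∈ [0,T′]. -/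

import Mathlib

/-! STATEMENT 5: the general solution of the Riccati equation obtained from a
particular solution `ξ`:  `y = ξ + y₀·F/(1 + y₀·G)` with
`F(t) = exp(2∫₀^t (u_b − u_c·ξ))` and `G(t) = ∫₀^t u_c·F`. -/

open MeasureTheory

/-- `F(t) = exp(2∫₀^t (u_b(s) − u_c(s)ξ(s)) ds)`. -/
noncomputable def riccF (ub uc ξ : ℝ → ℝ) (t : ℝ) : ℝ :=
  Real.exp (2 * ∫ s in (0 : ℝ)..t, (ub s - uc s * ξ s))

/-- `G(t) = ∫₀^t u_c(s)·F(s) ds`. -/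
noncomputable def riccG (ub uc ξ : ℝ → ℝ) (t : ℝ) : ℝ :=
  ∫ s in (0 : ℝ)..t, uc s * riccF ub uc ξ s

/-- The candidate general solution `y(t) = ξ(t) + y₀·F(t)/(1 + y₀·G(t))`. -/
noncomputable def riccY (ub uc ξ : ℝ → ℝ) (y₀ t : ℝ) : ℝ :=
  ξ t + y₀ * riccF ub uc ξ t / (1 + y₀ * riccG ub uc ξ t)

section RiccAux

open Set Filter intervalIntegral Topology

variable {T' : ℝ}

private lemma ricc_ii_of_icc {f : ℝ → ℝ} (hf : IntegrableOn f (Icc (0:ℝ) T')) {t : ℝ}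
    (ht : t ∈ Icc (0:ℝ) T') : IntervalIntegrable f volume 0 t := by
  apply (hf.mono_set ?_).intervalIntegrable
  rw [uIcc_of_le ht.1]
  exact Icc_subset_Icc le_rfl ht.2

private lemma ricc_cont_primitive (hT : 0 ≤ T') {f : ℝ → ℝ}
    (hf : IntegrableOn f (Icc (0:ℝ) T')) :
    ContinuousOn (fun t => ∫ s in (0:ℝ)..t, f s) (Icc (0:ℝ) T') := by
  have h := continuousOn_primitive_interval (a := (0:ℝ)) (b := T') (μ := volume) (f := f) ?_
  · rwa [uIcc_of_le hT] at h
  · rwa [uIcc_of_le hT]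

private lemma ricc_mul_right {f g : ℝ → ℝ} (hf : IntegrableOn f (Icc (0:ℝ) T'))
    (hg : ContinuousOn g (Icc (0:ℝ) T')) :
    IntegrableOn (fun s => f s * g s) (Icc (0:ℝ) T') := by
  obtain ⟨C, hC⟩ := isCompact_Icc.exists_bound_of_continuousOn hg
  have hgm : AEStronglyMeasurable g (volume.restrict (Icc (0:ℝ) T')) :=
    hg.aestronglyMeasurable measurableSet_Icc
  have hb : ∀ᵐ x ∂(volume.restrict (Icc (0:ℝ) T')), ‖g x‖ ≤ C :=
    (ae_restrict_iff' measurableSet_Icc).2 (ae_of_all _ hC)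
  have := hf.bdd_mul hgm hb
  simpa [mul_comm, IntegrableOn] using this

private lemma ricc_mul_left {f g : ℝ → ℝ} (hf : IntegrableOn f (Icc (0:ℝ) T'))
    (hg : ContinuousOn g (Icc (0:ℝ) T')) :
    IntegrableOn (fun s => g s * f s) (Icc (0:ℝ) T') := by
  simpa [mul_comm] using ricc_mul_right hf hg

/-- Core Fubini identity: `P(t)·Q(t) = ∫₀^t (f·Q + P·g)` for primitives `P, Q` of `f, g`. -/
private lemma ricc_prp_core (hT : 0 ≤ T') {f g : ℝ → ℝ} (hf : IntegrableOn f (Icc (0:ℝ) T'))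
    (hg : IntegrableOn g (Icc (0:ℝ) T')) {t : ℝ} (ht : t ∈ Icc (0:ℝ) T') :
    (∫ s in (0:ℝ)..t, f s) * (∫ s in (0:ℝ)..t, g s)
      = ∫ s in (0:ℝ)..t,
          (f s * (∫ r in (0:ℝ)..s, g r) + (∫ r in (0:ℝ)..s, f r) * g s) := by
  obtain ⟨ht0, htT⟩ := ht
  have hsub : Ioc (0:ℝ) t ⊆ Icc (0:ℝ) T' := fun x hx => ⟨hx.1.le, hx.2.trans htT⟩
  set μ := volume.restrict (Ioc (0:ℝ) t) with hμ
  have hfμ : Integrable f μ := hf.mono_set hsub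
  have hgμ : Integrable g μ := hg.mono_set hsub
  have hprod : Integrable (fun p : ℝ × ℝ => f p.1 * g p.2) (μ.prod μ) := hfμ.mul_prod hgμ
  have hA : MeasurableSet {p : ℝ × ℝ | p.2 ≤ p.1} := measurableSet_le measurable_snd measurable_fst
  have hA' : MeasurableSet {p : ℝ × ℝ | p.1 < p.2} := measurableSet_lt measurable_fst measurable_snd
  have h1 : Integrable ({p : ℝ × ℝ | p.2 ≤ p.1}.indicator fun p => f p.1 * g p.2) (μ.prod μ) :=
    hprod.indicator hA
  have h2 : Integrable ({p : ℝ × ℝ | p.1 < p.2}.indicator fun p => f p.1 * g p.2) (μ.prod μ) :=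
    hprod.indicator hA'
  have hsplit : (fun p : ℝ × ℝ => f p.1 * g p.2)
      = fun p => {p : ℝ × ℝ | p.2 ≤ p.1}.indicator (fun p => f p.1 * g p.2) p
          + {p : ℝ × ℝ | p.1 < p.2}.indicator (fun p => f p.1 * g p.2) p := by
    funext p
    by_cases h : p.2 ≤ p.1
    · simp [indicator_apply, h, not_lt.2 h]
    · simp [indicator_apply, h, not_le.1 h]
  have e1 : ∫ p, ({p : ℝ × ℝ | p.2 ≤ p.1}.indicator fun p => f p.1 * g p.2) p ∂(μ.prod μ)
      = ∫ s, f s * (∫ r in (0:ℝ)..s, g r) ∂μ := by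
    rw [integral_prod _ h1]
    refine integral_congr_ae ?_
    filter_upwards [ae_restrict_mem measurableSet_Ioc] with s hs
    have hind : (fun r => ({p : ℝ × ℝ | p.2 ≤ p.1}.indicator fun p => f p.1 * g p.2) (s, r))
        = (Iic s).indicator (fun r => f s * g r) := by
      funext r
      by_cases h : r ≤ s <;> simp [indicator_apply, h]
    rw [hind, MeasureTheory.integral_indicator measurableSet_Iic, hμ,
      Measure.restrict_restrict measurableSet_Iic]
    have hset : Iic s ∩ Ioc (0:ℝ) t = Ioc 0 s := by
      ext r
      simp only [mem_inter_iff, mem_Iic, mem_Ioc]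
      constructor
      · rintro ⟨h1, h2, h3⟩; exact ⟨h2, h1⟩
      · rintro ⟨h1, h2⟩; exact ⟨h2, h1, h2.trans hs.2⟩
    rw [hset, MeasureTheory.integral_const_mul, intervalIntegral.integral_of_le hs.1.le]
  have e2 : ∫ p, ({p : ℝ × ℝ | p.1 < p.2}.indicator fun p => f p.1 * g p.2) p ∂(μ.prod μ)
      = ∫ r, (∫ s in (0:ℝ)..r, f s) * g r ∂μ := by
    rw [integral_prod_symm _ h2]
    refine integral_congr_ae ?_
    filter_upwards [ae_restrict_mem measurableSet_Ioc] with r hr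
    have hind : (fun s => ({p : ℝ × ℝ | p.1 < p.2}.indicator fun p => f p.1 * g p.2) (s, r))
        = (Iio r).indicator (fun s => f s * g r) := by
      funext s
      by_cases h : s < r <;> simp [indicator_apply, h]
    rw [hind, MeasureTheory.integral_indicator measurableSet_Iio, hμ,
      Measure.restrict_restrict measurableSet_Iio]
    have hset : Iio r ∩ Ioc (0:ℝ) t = Ioo 0 r := by
      ext s
      simp only [mem_inter_iff, mem_Iio, mem_Ioc, mem_Ioo]
      constructor
      · rintro ⟨h1, h2, h3⟩; exact ⟨h2, h1⟩
      · rintro ⟨h1, h2⟩; exact ⟨h2, h1, h2.le.trans hr.2⟩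
    rw [hset, ← MeasureTheory.integral_Ioc_eq_integral_Ioo, MeasureTheory.integral_mul_const,
      intervalIntegral.integral_of_le hr.1.le]
  have hQcont : ContinuousOn (fun s => ∫ r in (0:ℝ)..s, g r) (Icc (0:ℝ) T') :=
    ricc_cont_primitive (ht0.trans htT) hg
  have hPcont : ContinuousOn (fun s => ∫ r in (0:ℝ)..s, f r) (Icc (0:ℝ) T') :=
    ricc_cont_primitive (ht0.trans htT) hf
  have hfQ : Integrable (fun s => f s * (∫ r in (0:ℝ)..s, g r)) μ :=
    (ricc_mul_right hf hQcont).mono_set hsub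
  have hPg : Integrable (fun s => (∫ r in (0:ℝ)..s, f r) * g s) μ :=
    (ricc_mul_left hg hPcont).mono_set hsub
  calc (∫ s in (0:ℝ)..t, f s) * (∫ s in (0:ℝ)..t, g s)
      = (∫ s, f s ∂μ) * (∫ s, g s ∂μ) := by
        rw [intervalIntegral.integral_of_le ht0, intervalIntegral.integral_of_le ht0]
    _ = ∫ p, f p.1 * g p.2 ∂(μ.prod μ) := (integral_prod_mul f g).symm
    _ = ∫ s, (f s * (∫ r in (0:ℝ)..s, g r) + (∫ r in (0:ℝ)..s, f r) * g s) ∂μ := by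
        rw [hsplit, integral_add h1 h2, e1, e2, ← integral_add hfQ hPg]
    _ = ∫ s in (0:ℝ)..t,
          (f s * (∫ r in (0:ℝ)..s, g r) + (∫ r in (0:ℝ)..s, f r) * g s) := by
        rw [intervalIntegral.integral_of_le ht0]

/-- Product rule for primitives with constants. -/
private lemma ricc_prp (hT : 0 ≤ T') {f g : ℝ → ℝ} (hf : IntegrableOn f (Icc (0:ℝ) T'))
    (hg : IntegrableOn g (Icc (0:ℝ) T')) (c d : ℝ) {t : ℝ} (ht : t ∈ Icc (0:ℝ) T') :
    (c + ∫ s in (0:ℝ)..t, f s) * (d + ∫ s in (0:ℝ)..t, g s)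
      = c * d + ∫ s in (0:ℝ)..t,
          (f s * (d + ∫ r in (0:ℝ)..s, g r) + (c + ∫ r in (0:ℝ)..s, f r) * g s) := by
  have hQc : ContinuousOn (fun s => ∫ r in (0:ℝ)..s, g r) (Icc (0:ℝ) T') :=
    ricc_cont_primitive hT hg
  have hPc : ContinuousOn (fun s => ∫ r in (0:ℝ)..s, f r) (Icc (0:ℝ) T') :=
    ricc_cont_primitive hT hf
  have hfQ : IntervalIntegrable (fun s => f s * (∫ r in (0:ℝ)..s, g r)) volume 0 t :=
    ricc_ii_of_icc (ricc_mul_right hf hQc) ht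
  have hPg : IntervalIntegrable (fun s => (∫ r in (0:ℝ)..s, f r) * g s) volume 0 t :=
    ricc_ii_of_icc (ricc_mul_left hg hPc) ht
  have hfi : IntervalIntegrable f volume 0 t := ricc_ii_of_icc hf ht
  have hgi : IntervalIntegrable g volume 0 t := ricc_ii_of_icc hg ht
  have expand : ∀ s : ℝ, f s * (d + ∫ r in (0:ℝ)..s, g r) + (c + ∫ r in (0:ℝ)..s, f r) * g s
      = (f s * (∫ r in (0:ℝ)..s, g r) + (∫ r in (0:ℝ)..s, f r) * g s)
        + (d * f s + c * g s) := by intro s; ring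
  have core := ricc_prp_core hT hf hg ht
  rw [intervalIntegral.integral_add hfQ hPg] at core
  rw [intervalIntegral.integral_congr (fun s _ => expand s),
    intervalIntegral.integral_add (hfQ.add hPg) ((hfi.const_mul d).add (hgi.const_mul c)),
    intervalIntegral.integral_add hfQ hPg,
    intervalIntegral.integral_add (hfi.const_mul d) (hgi.const_mul c),
    intervalIntegral.integral_const_mul, intervalIntegral.integral_const_mul]
  linear_combination core

/-- Powers of a primitive: `P(t)^(n+1) = (n+1)·∫₀^t f·Pⁿ`. -/
private lemma ricc_prim_pow (hT : 0 ≤ T') {f : ℝ → ℝ} (hf : IntegrableOn f (Icc (0:ℝ) T'))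
    (n : ℕ) {t : ℝ} (ht : t ∈ Icc (0:ℝ) T') :
    (∫ s in (0:ℝ)..t, f s) ^ (n + 1)
      = ∫ s in (0:ℝ)..t, ((n + 1 : ℝ) * (f s * (∫ r in (0:ℝ)..s, f r) ^ n)) := by
  induction n generalizing t with
  | zero => simp
  | succ n ih =>
    have hPc : ContinuousOn (fun s => ∫ r in (0:ℝ)..s, f r) (Icc (0:ℝ) T') :=
      ricc_cont_primitive hT hf
    have hgn : IntegrableOn (fun s => (n + 1 : ℝ) * (f s * (∫ r in (0:ℝ)..s, f r) ^ n))
        (Icc (0:ℝ) T') := ((ricc_mul_right hf (hPc.pow n))).const_mul _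
    have key := ricc_prp_core hT hf hgn ht
    calc (∫ s in (0:ℝ)..t, f s) ^ (n + 1 + 1)
        = (∫ s in (0:ℝ)..t, f s) * (∫ s in (0:ℝ)..t, f s) ^ (n + 1) := by ring
      _ = (∫ s in (0:ℝ)..t, f s)
            * ∫ s in (0:ℝ)..t, ((n:ℝ) + 1) * (f s * (∫ r in (0:ℝ)..s, f r) ^ n) := by
          rw [← ih ht]
      _ = ∫ s in (0:ℝ)..t,
            (f s * (∫ r in (0:ℝ)..s, ((n:ℝ) + 1) * (f r * (∫ r' in (0:ℝ)..r, f r') ^ n))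
              + (∫ r in (0:ℝ)..s, f r) * (((n:ℝ) + 1) * (f s * (∫ r in (0:ℝ)..s, f r) ^ n))) :=
          key
      _ = ∫ s in (0:ℝ)..t, ((↑(n + 1) + 1 : ℝ) * (f s * (∫ r in (0:ℝ)..s, f r) ^ (n + 1))) := by
          refine intervalIntegral.integral_congr fun s hs => ?_
          have hs' : s ∈ Icc (0:ℝ) T' := by
            rw [uIcc_of_le ht.1] at hs
            exact ⟨hs.1, hs.2.trans ht.2⟩
          rw [← ih hs']
          push_cast
          ring

private lemma ricc_exp_partial_sum_le (x : ℝ) (N : ℕ) :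
    |(∑ n ∈ Finset.range N, x ^ n / (Nat.factorial n))| ≤ Real.exp |x| := by
  have hs : HasSum (fun n : ℕ => |x| ^ n / (Nat.factorial n)) (Real.exp |x|) := by
    rw [Real.exp_eq_exp_ℝ]
    exact NormedSpace.expSeries_div_hasSum_exp |x|
  calc |(∑ n ∈ Finset.range N, x ^ n / (Nat.factorial n))|
      ≤ ∑ n ∈ Finset.range N, |x ^ n / (Nat.factorial n)| := Finset.abs_sum_le_sum_abs _ _
    _ = ∑ n ∈ Finset.range N, |x| ^ n / (Nat.factorial n) := by
        refine Finset.sum_congr rfl fun n _ => ?_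
        rw [abs_div, abs_pow, Nat.abs_cast]
    _ ≤ Real.exp |x| := sum_le_hasSum _ (fun n _ => by positivity) hs

private lemma ricc_tendsto_exp_partial_sum (x : ℝ) :
    Filter.Tendsto (fun N => ∑ n ∈ Finset.range N, x ^ n / (Nat.factorial n))
      Filter.atTop (nhds (Real.exp x)) := by
  have hs : HasSum (fun n : ℕ => x ^ n / (Nat.factorial n)) (Real.exp x) := by
    rw [Real.exp_eq_exp_ℝ]
    exact NormedSpace.expSeries_div_hasSum_exp x
  exact hs.tendsto_sum_nat

/-- Exponential of a primitive: `exp(P(t)) = 1 + ∫₀^t f·exp(P)`. -/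
private lemma ricc_prim_exp (hT : 0 ≤ T') {f : ℝ → ℝ} (hf : IntegrableOn f (Icc (0:ℝ) T'))
    {t : ℝ} (ht : t ∈ Icc (0:ℝ) T') :
    Real.exp (∫ s in (0:ℝ)..t, f s)
      = 1 + ∫ s in (0:ℝ)..t, f s * Real.exp (∫ r in (0:ℝ)..s, f r) := by
  have hPc : ContinuousOn (fun s => ∫ r in (0:ℝ)..s, f r) (Icc (0:ℝ) T') :=
    ricc_cont_primitive hT hf
  obtain ⟨M, hM⟩ := isCompact_Icc.exists_bound_of_continuousOn hPc
  have hN : ∀ N : ℕ, (∫ s in (0:ℝ)..t,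
        f s * (∑ n ∈ Finset.range N, (∫ r in (0:ℝ)..s, f r) ^ n / (Nat.factorial n)))
      = ∑ n ∈ Finset.range N, (∫ s in (0:ℝ)..t, f s) ^ (n + 1) / (Nat.factorial (n + 1)) := by
    intro N
    have hint : ∀ n : ℕ, IntervalIntegrable
        (fun s => f s * ((∫ r in (0:ℝ)..s, f r) ^ n / (Nat.factorial n))) volume 0 t := fun n =>
      ricc_ii_of_icc (ricc_mul_right hf ((hPc.pow n).div_const _)) ht
    have hsum : (fun s => f s * (∑ n ∈ Finset.range N,
          (∫ r in (0:ℝ)..s, f r) ^ n / (Nat.factorial n)))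
        = fun s => ∑ n ∈ Finset.range N,
            f s * ((∫ r in (0:ℝ)..s, f r) ^ n / (Nat.factorial n)) := by
      funext s; rw [Finset.mul_sum]
    rw [hsum, intervalIntegral.integral_finset_sum (fun n _ => hint n)]
    refine Finset.sum_congr rfl fun n _ => ?_
    have hp := ricc_prim_pow hT hf n ht
    rw [intervalIntegral.integral_const_mul] at hp
    have hci : (∫ s in (0:ℝ)..t, f s * ((∫ r in (0:ℝ)..s, f r) ^ n / (Nat.factorial n)))
        = (1 / ((Nat.factorial n) : ℝ)) * ∫ s in (0:ℝ)..t, f s * (∫ r in (0:ℝ)..s, f r) ^ n := by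
      rw [← intervalIntegral.integral_const_mul]
      refine intervalIntegral.integral_congr fun s _ => ?_
      ring
    rw [hci]
    have hfac : ((Nat.factorial (n + 1)) : ℝ) = (n + 1 : ℝ) * (Nat.factorial n) := by
      rw [Nat.factorial_succ]; push_cast; ring
    have hn1 : (n + 1 : ℝ) ≠ 0 := by positivity
    have hnf : ((Nat.factorial n) : ℝ) ≠ 0 := by positivity
    field_simp [hfac]
    rw [hfac]
    linear_combination (-(Nat.factorial n : ℝ)) * hp
  have hlhs : Filter.Tendsto (fun N => ∫ s in (0:ℝ)..t,
        f s * (∑ n ∈ Finset.range N, (∫ r in (0:ℝ)..s, f r) ^ n / (Nat.factorial n)))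
      Filter.atTop
      (nhds (∫ s in (0:ℝ)..t, f s * Real.exp (∫ r in (0:ℝ)..s, f r))) := by
    refine intervalIntegral.tendsto_integral_filter_of_dominated_convergence
      (fun s => |f s| * Real.exp M) ?_ ?_ ?_ ?_
    · refine Filter.Eventually.of_forall fun N => ?_
      have h1 : AEStronglyMeasurable f (volume.restrict (Set.uIoc (0:ℝ) t)) := by
        have hss : Set.uIoc (0:ℝ) t ⊆ Icc (0:ℝ) T' := by
          rw [uIoc_of_le ht.1]
          exact (Ioc_subset_Icc_self).trans (Icc_subset_Icc le_rfl ht.2)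
        exact (hf.mono_set hss).aestronglyMeasurable
      have h2 : ContinuousOn
          (fun s => ∑ n ∈ Finset.range N, (∫ r in (0:ℝ)..s, f r) ^ n / (Nat.factorial n))
          (Icc (0:ℝ) T') := by
        refine continuousOn_finset_sum _ fun n _ => ?_
        exact (hPc.pow n).div_const _
      have h2' : AEStronglyMeasurable
          (fun s => ∑ n ∈ Finset.range N, (∫ r in (0:ℝ)..s, f r) ^ n / (Nat.factorial n))
          (volume.restrict (Set.uIoc (0:ℝ) t)) := by
        refine AEStronglyMeasurable.mono_measure
          (μ := volume.restrict (Icc (0:ℝ) T'))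
          (h2.aestronglyMeasurable measurableSet_Icc) (Measure.restrict_mono ?_ le_rfl)
        rw [uIoc_of_le ht.1]
        exact (Ioc_subset_Icc_self).trans (Icc_subset_Icc le_rfl ht.2)
      exact h1.mul h2'
    · refine Filter.Eventually.of_forall fun N => ae_of_all _ fun s hs => ?_
      have hs' : s ∈ Icc (0:ℝ) T' := by
        rw [uIoc_of_le ht.1] at hs
        exact ⟨hs.1.le, hs.2.trans ht.2⟩
      have hb := ricc_exp_partial_sum_le (∫ r in (0:ℝ)..s, f r) N
      have hMs := hM s hs'
      rw [Real.norm_eq_abs, abs_mul]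
      have hexp : Real.exp |∫ r in (0:ℝ)..s, f r| ≤ Real.exp M :=
        Real.exp_le_exp.2 (le_trans (le_abs_self _) (by simpa using hMs))
      exact mul_le_mul (le_refl _) (hb.trans hexp) (abs_nonneg _) (abs_nonneg _)
    · exact (ricc_ii_of_icc (hf.abs) ht).mul_const _
    · refine ae_of_all _ fun s hs => ?_
      exact (ricc_tendsto_exp_partial_sum _).const_mul _
  have hrhs : Filter.Tendsto (fun N => ∑ n ∈ Finset.range N,
        (∫ s in (0:ℝ)..t, f s) ^ (n + 1) / (Nat.factorial (n + 1)))
      Filter.atTop (nhds (Real.exp (∫ s in (0:ℝ)..t, f s) - 1)) := by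
    have h := ricc_tendsto_exp_partial_sum (∫ s in (0:ℝ)..t, f s)
    have hshift : ∀ N : ℕ, (∑ n ∈ Finset.range N,
          (∫ s in (0:ℝ)..t, f s) ^ (n + 1) / (Nat.factorial (n + 1)))
        = (∑ n ∈ Finset.range (N + 1), (∫ s in (0:ℝ)..t, f s) ^ n / (Nat.factorial n)) - 1 := by
      intro N
      rw [Finset.sum_range_succ' (fun n => (∫ s in (0:ℝ)..t, f s) ^ n / (Nat.factorial n)) N]
      simp
    simp_rw [hshift]
    exact ((h.comp (Filter.tendsto_add_atTop_nat 1)).sub tendsto_const_nhds)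
  simp only [hN] at hlhs
  have := tendsto_nhds_unique hlhs hrhs
  linarith [this]

/-- Gronwall-type uniqueness: a continuous solution of `E = ∫₀^· ψ·E` vanishes. -/
private lemma ricc_gronwall_zero (hT : 0 ≤ T') {ψ E : ℝ → ℝ}
    (hψ : IntegrableOn ψ (Icc (0:ℝ) T')) (hE : ContinuousOn E (Icc (0:ℝ) T'))
    (heq : ∀ t ∈ Icc (0:ℝ) T', E t = ∫ s in (0:ℝ)..t, ψ s * E s)
    {t : ℝ} (ht : t ∈ Icc (0:ℝ) T') : E t = 0 := by
  obtain ⟨M, hM⟩ := isCompact_Icc.exists_bound_of_continuousOn hE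
  have hψa : IntegrableOn (fun s => |ψ s|) (Icc (0:ℝ) T') := hψ.abs
  have hAc : ContinuousOn (fun u => ∫ s in (0:ℝ)..u, |ψ s|) (Icc (0:ℝ) T') :=
    ricc_cont_primitive hT hψa
  have key : ∀ n : ℕ, ∀ u ∈ Icc (0:ℝ) T',
      |E u| ≤ M * (∫ s in (0:ℝ)..u, |ψ s|) ^ n / (Nat.factorial n) := by
    intro n
    induction n with
    | zero =>
      intro u hu
      simpa using hM u hu
    | succ n ih =>
      intro u hu
      have h1 : |E u| ≤ ∫ s in (0:ℝ)..u, |ψ s * E s| := by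
        rw [heq u hu]
        exact intervalIntegral.abs_integral_le_integral_abs hu.1
      have hii1 : IntervalIntegrable (fun s => |ψ s * E s|) volume 0 u :=
        (ricc_ii_of_icc (ricc_mul_right hψ hE) hu).abs
      have hBc : ContinuousOn
          (fun s => M * (∫ r in (0:ℝ)..s, |ψ r|) ^ n / (Nat.factorial n)) (Icc (0:ℝ) T') :=
        (continuousOn_const.mul (hAc.pow n)).div_const _
      have hii2 : IntervalIntegrable
          (fun s => |ψ s| * (M * (∫ r in (0:ℝ)..s, |ψ r|) ^ n / (Nat.factorial n))) volume 0 u :=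
        ricc_ii_of_icc (ricc_mul_right hψa hBc) hu
      have h2 : (∫ s in (0:ℝ)..u, |ψ s * E s|)
          ≤ ∫ s in (0:ℝ)..u, |ψ s| * (M * (∫ r in (0:ℝ)..s, |ψ r|) ^ n / (Nat.factorial n)) := by
        refine intervalIntegral.integral_mono_on hu.1 hii1 hii2 fun s hs => ?_
        have hs' : s ∈ Icc (0:ℝ) T' := ⟨hs.1, hs.2.trans hu.2⟩
        rw [abs_mul]
        exact mul_le_mul_of_nonneg_left (ih s hs') (abs_nonneg _)
      have hp := ricc_prim_pow hT hψa n hu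
      rw [intervalIntegral.integral_const_mul] at hp
      have hn1 : (n + 1 : ℝ) ≠ 0 := by positivity
      have h4 : (∫ s in (0:ℝ)..u, |ψ s| * (∫ r in (0:ℝ)..s, |ψ r|) ^ n)
          = (∫ s in (0:ℝ)..u, |ψ s|) ^ (n + 1) / (n + 1 : ℝ) := by
        rw [eq_div_iff hn1]
        linarith [hp]
      have h3 : (∫ s in (0:ℝ)..u, |ψ s| * (M * (∫ r in (0:ℝ)..s, |ψ r|) ^ n / (Nat.factorial n)))
          = (M / (Nat.factorial n)) * ∫ s in (0:ℝ)..u, |ψ s| * (∫ r in (0:ℝ)..s, |ψ r|) ^ n := by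
        rw [← intervalIntegral.integral_const_mul]
        exact intervalIntegral.integral_congr fun s _ => by ring
      have hfac : ((Nat.factorial (n + 1)) : ℝ) = (n + 1 : ℝ) * (Nat.factorial n) := by
        rw [Nat.factorial_succ]; push_cast; ring
      calc |E u| ≤ ∫ s in (0:ℝ)..u,
            |ψ s| * (M * (∫ r in (0:ℝ)..s, |ψ r|) ^ n / (Nat.factorial n)) := h1.trans h2
        _ = (M / (Nat.factorial n))
              * ∫ s in (0:ℝ)..u, |ψ s| * (∫ r in (0:ℝ)..s, |ψ r|) ^ n := h3
        _ = M * (∫ s in (0:ℝ)..u, |ψ s|) ^ (n + 1) / (Nat.factorial (n + 1)) := by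
            rw [h4, hfac]
            have hnf : ((Nat.factorial n) : ℝ) ≠ 0 := by positivity
            field_simp
  have htend : Filter.Tendsto
      (fun n : ℕ => M * (∫ s in (0:ℝ)..t, |ψ s|) ^ n / (Nat.factorial n))
      Filter.atTop (nhds 0) := by
    have h := (FloorSemiring.tendsto_pow_div_factorial_atTop
      (K := ℝ) (∫ s in (0:ℝ)..t, |ψ s|)).const_mul M
    simpa [mul_div_assoc] using h
  have hle : |E t| ≤ 0 := ge_of_tendsto' htend (fun n => key n t ht)
  exact abs_nonpos_iff.mp hle

/-- Lebesgue differentiation: the primitive of an integrable function has derivative `g t`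
at almost every `t`. -/
private lemma ricc_ae_hasDerivAt_primitive {g : ℝ → ℝ}
    (hg : Integrable g (volume : Measure ℝ)) :
    ∀ᵐ t : ℝ, HasDerivAt (fun u => ∫ s in (0:ℝ)..u, g s) (g t) t := by
  have hloc : LocallyIntegrable g volume := hg.locallyIntegrable
  filter_upwards [IsUnifLocDoublingMeasure.ae_tendsto_average_norm_sub
    (μ := (volume : Measure ℝ)) hloc 1] with x hx
  have h1 : Filter.Tendsto (fun u : ℝ => |u - x| / 2) (𝓝[≠] x) (nhds 0) := by
    have h : Filter.Tendsto (fun u : ℝ => |u - x| / 2) (nhds x) (nhds 0) := by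
      have hc : Continuous fun u : ℝ => |u - x| / 2 :=
        ((continuous_id.sub continuous_const).abs).div_const 2
      have := hc.tendsto x
      simpa using this
    exact h.mono_left nhdsWithin_le_nhds
  have h2 : ∀ᶠ u in 𝓝[≠] x, (fun u : ℝ => |u - x| / 2) u ∈ Ioi (0:ℝ) := by
    filter_upwards [self_mem_nhdsWithin] with u hu
    have hne : u - x ≠ 0 := sub_ne_zero.2 hu
    have := abs_pos.2 hne
    exact div_pos this two_pos
  have hδ : Filter.Tendsto (fun u : ℝ => |u - x| / 2) (𝓝[≠] x) (𝓝[>] 0) :=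
    tendsto_nhdsWithin_iff.2 ⟨h1, h2⟩
  have hmem : ∀ᶠ u in 𝓝[≠] x,
      x ∈ Metric.closedBall ((x + u) / 2) (1 * (|u - x| / 2)) := by
    refine Filter.Eventually.of_forall fun u => ?_
    rw [Metric.mem_closedBall, Real.dist_eq, one_mul]
    have he : x - (x + u) / 2 = (x - u) / 2 := by ring
    rw [he, abs_div, abs_two, abs_sub_comm]
  have havg := hx (fun u => (x + u) / 2) (fun u => |u - x| / 2) hδ hmem
  have hball : ∀ u : ℝ,
      Metric.closedBall ((x + u) / 2) (|u - x| / 2) = Icc (min x u) (max x u) := by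
    intro u
    rw [Real.closedBall_eq_Icc]
    rcases le_total x u with h | h
    · rw [abs_of_nonneg (by linarith : (0:ℝ) ≤ u - x), min_eq_left h, max_eq_right h]
      congr 1 <;> ring
    · rw [abs_of_nonpos (by linarith : u - x ≤ 0), min_eq_right h, max_eq_left h]
      congr 1 <;> ring
  rw [hasDerivAt_iff_tendsto_slope]
  rw [tendsto_iff_norm_sub_tendsto_zero]
  refine squeeze_zero' (Filter.Eventually.of_forall fun u => norm_nonneg _) ?_ havg
  filter_upwards [self_mem_nhdsWithin] with u hu
  have hune : u ≠ x := hu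
  have hxu : u - x ≠ 0 := sub_ne_zero.2 hune
  rw [hball u]
  have hvol : (volume (Icc (min x u) (max x u))).toReal = |u - x| := by
    rw [Real.volume_Icc, ENNReal.toReal_ofReal (sub_nonneg.2 min_le_max)]
    rcases le_total x u with h | h
    · rw [min_eq_left h, max_eq_right h, abs_of_nonneg (by linarith)]
    · rw [min_eq_right h, max_eq_left h, abs_of_nonpos (by linarith)]
      ring
  have hii : ∀ a b : ℝ, IntervalIntegrable g volume a b := fun a b => hg.intervalIntegrable
  have hsub : (fun u => ∫ s in (0:ℝ)..u, g s) u - (fun u => ∫ s in (0:ℝ)..u, g s) x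
      = ∫ s in x..u, g s := intervalIntegral.integral_interval_sub_left (hii 0 u) (hii 0 x)
  have hslope : slope (fun u => ∫ s in (0:ℝ)..u, g s) x u - g x
      = (∫ s in x..u, (g s - g x)) / (u - x) := by
    rw [slope_def_field]
    rw [intervalIntegral.integral_sub (hii x u) intervalIntegrable_const,
      intervalIntegral.integral_const, smul_eq_mul]
    simp only at hsub
    rw [hsub]
    field_simp
  have hbound : |∫ s in x..u, (g s - g x)|
      ≤ ∫ s in Icc (min x u) (max x u), |g s - g x| := by
    have h3 : IntervalIntegrable (fun s => g s - g x) volume x u :=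
      (hii x u).sub intervalIntegrable_const
    rcases le_total x u with h | h
    · rw [MeasureTheory.integral_Icc_eq_integral_Ioc, min_eq_left h, max_eq_right h,
        ← intervalIntegral.integral_of_le h]
      exact intervalIntegral.abs_integral_le_integral_abs h
    · rw [MeasureTheory.integral_Icc_eq_integral_Ioc, min_eq_right h, max_eq_left h,
        ← intervalIntegral.integral_of_le h, intervalIntegral.integral_symm u x, abs_neg]
      exact intervalIntegral.abs_integral_le_integral_abs h
  rw [Real.norm_eq_abs, hslope, abs_div]
  rw [setAverage_eq]
  rw [measureReal_def, hvol]
  rw [smul_eq_mul]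
  have habs : |u - x| > 0 := abs_pos.2 hxu
  rw [div_le_iff₀ habs, mul_comm (|u - x|)⁻¹, mul_assoc]
  rw [inv_mul_cancel₀ (ne_of_gt habs), mul_one]
  calc |∫ s in x..u, (g s - g x)| ≤ ∫ s in Icc (min x u) (max x u), |g s - g x| := hbound
    _ = ∫ s in Icc (min x u) (max x u), ‖g s - g x‖ := by simp [Real.norm_eq_abs]

/-- The restricted a.e.-derivative statement for a function which equals
`c + ∫₀^· g` on `[0,T']`. -/
private lemma ricc_ae_hasDerivAt_restrict (hT : 0 < T') {g : ℝ → ℝ}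
    (hg : IntegrableOn g (Icc (0:ℝ) T')) {Y : ℝ → ℝ} (c : ℝ)
    (hY : ∀ u ∈ Icc (0:ℝ) T', Y u = c + ∫ s in (0:ℝ)..u, g s) :
    ∀ᵐ t ∂(volume.restrict (Icc (0:ℝ) T')), HasDerivAt Y (g t) t := by
  set g' : ℝ → ℝ := (Icc (0:ℝ) T').indicator g with hg'def
  have hg' : Integrable g' volume := (integrable_indicator_iff measurableSet_Icc).2 hg
  have hprim : ∀ u ∈ Icc (0:ℝ) T',
      (∫ s in (0:ℝ)..u, g' s) = ∫ s in (0:ℝ)..u, g s := by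
    intro u hu
    rw [intervalIntegral.integral_of_le hu.1, intervalIntegral.integral_of_le hu.1, hg'def,
      MeasureTheory.setIntegral_indicator measurableSet_Icc]
    congr 1
    rw [inter_eq_self_of_subset_left]
    exact fun x hx => ⟨hx.1.le, hx.2.trans hu.2⟩
  have h1 : ∀ᵐ t ∂(volume.restrict (Icc (0:ℝ) T')),
      HasDerivAt (fun u => ∫ s in (0:ℝ)..u, g' s) (g' t) t :=
    ae_restrict_of_ae (ricc_ae_hasDerivAt_primitive hg')
  have h2 : ∀ᵐ t ∂(volume.restrict (Icc (0:ℝ) T')), t ∈ Ioo (0:ℝ) T' := by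
    rw [ae_iff, Measure.restrict_apply' measurableSet_Icc]
    refine measure_mono_null (fun s hs => ?_) (?_ : volume ({0, T'} : Set ℝ) = 0)
    · obtain ⟨h1s, h2s⟩ := hs
      simp only [mem_setOf_eq, mem_Ioo, not_and_or, not_lt] at h1s
      rcases h1s with h | h
      · exact Or.inl (le_antisymm h h2s.1)
      · exact Or.inr (le_antisymm h2s.2 h)
    · exact (Set.toFinite ({0, T'} : Set ℝ)).measure_zero _
  filter_upwards [h1, h2, ae_restrict_mem measurableSet_Icc] with t h1t h2t h3t
  have heq : Y =ᶠ[nhds t] fun u => c + ∫ s in (0:ℝ)..u, g' s := by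
    filter_upwards [isOpen_Ioo.mem_nhds h2t] with u hu
    rw [hY u (Ioo_subset_Icc_self hu), hprim u (Ioo_subset_Icc_self hu)]
  have hd := (h1t.const_add c).congr_of_eventuallyEq heq
  rwa [hg'def, indicator_of_mem h3t] at hd

end RiccAux

/-- Let `u_a, u_b, u_c` be integrable on `[0,T]` and let `ξ` be an absolutely
continuous particular solution of the Riccati equation with `ξ(0) = 0`
(expressed through the integral identity `ξ(t) = ∫₀^t (u_a + 2u_b·ξ − u_c·ξ²)`,
together with continuity of `ξ`).  Then for every `y₀` and every `T′ ∈ (0,T]`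
with `1 + y₀·G(t) ≠ 0` on `[0,T′]`, the function `y = ξ + y₀·F/(1 + y₀·G)`
satisfies `y(0) = y₀`, is absolutely continuous on `[0,T′]` — expressed by
`y(t) = y₀ + ∫₀^t (u_a + 2u_b·y − u_c·y²)` — and satisfies
`y′(t) = u_a(t) + 2u_b(t)·y(t) − u_c(t)·y(t)²` almost everywhere on `[0,T′]`. -/
theorem riccati_general_solution (T : ℝ) (hT : 0 < T) (ua ub uc ξ : ℝ → ℝ)
    (hua : IntegrableOn ua (Set.Icc (0 : ℝ) T))
    (hub : IntegrableOn ub (Set.Icc (0 : ℝ) T))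
    (huc : IntegrableOn uc (Set.Icc (0 : ℝ) T))
    (hξcont : ContinuousOn ξ (Set.Icc (0 : ℝ) T))
    (hξ : ∀ t ∈ Set.Icc (0 : ℝ) T,
      ξ t = ∫ s in (0 : ℝ)..t, (ua s + 2 * ub s * ξ s - uc s * ξ s ^ 2)) :
    ∀ y₀ T' : ℝ, 0 < T' → T' ≤ T →
      (∀ t ∈ Set.Icc (0 : ℝ) T', 1 + y₀ * riccG ub uc ξ t ≠ 0) →
      riccY ub uc ξ y₀ 0 = y₀ ∧
      (∀ t ∈ Set.Icc (0 : ℝ) T',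
        riccY ub uc ξ y₀ t = y₀ +
          ∫ s in (0 : ℝ)..t,
            (ua s + 2 * ub s * riccY ub uc ξ y₀ s - uc s * riccY ub uc ξ y₀ s ^ 2)) ∧
      (∀ᵐ t ∂(volume.restrict (Set.Icc (0 : ℝ) T')),
        HasDerivAt (riccY ub uc ξ y₀)
          (ua t + 2 * ub t * riccY ub uc ξ y₀ t - uc t * riccY ub uc ξ y₀ t ^ 2) t) := by
  intro y₀ T' hT'pos hT'le hH
  have hT'0 : (0:ℝ) ≤ T' := hT'pos.le
  have hsub : Set.Icc (0:ℝ) T' ⊆ Set.Icc (0:ℝ) T := Set.Icc_subset_Icc le_rfl hT'le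
  have hua' : IntegrableOn ua (Set.Icc (0:ℝ) T') := hua.mono_set hsub
  have hub' : IntegrableOn ub (Set.Icc (0:ℝ) T') := hub.mono_set hsub
  have huc' : IntegrableOn uc (Set.Icc (0:ℝ) T') := huc.mono_set hsub
  have hξc' : ContinuousOn ξ (Set.Icc (0:ℝ) T') := hξcont.mono hsub
  -- the coefficient b = 2(ub − uc ξ)
  set b : ℝ → ℝ := fun s => 2 * (ub s - uc s * ξ s) with hbdef
  have hb : IntegrableOn b (Set.Icc (0:ℝ) T') := by
    have h1 : IntegrableOn (fun s => ub s - uc s * ξ s) (Set.Icc (0:ℝ) T') :=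
      hub'.sub (ricc_mul_right huc' hξc')
    exact h1.const_mul 2
  -- F = exp of primitive of b
  have hFeq : ∀ t : ℝ, riccF ub uc ξ t = Real.exp (∫ s in (0:ℝ)..t, b s) := by
    intro t
    rw [riccF, hbdef]
    congr 1
    rw [intervalIntegral.integral_const_mul]
  have hPc : ContinuousOn (fun u => ∫ s in (0:ℝ)..u, b s) (Set.Icc (0:ℝ) T') :=
    ricc_cont_primitive hT'0 hb
  have hFc : ContinuousOn (riccF ub uc ξ) (Set.Icc (0:ℝ) T') := by
    have h := Real.continuous_exp.comp_continuousOn hPc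
    refine h.congr fun t _ => hFeq t
  have hF_rep : ∀ t ∈ Set.Icc (0:ℝ) T', riccF ub uc ξ t
      = 1 + ∫ s in (0:ℝ)..t, b s * riccF ub uc ξ s := by
    intro t ht
    rw [hFeq t, ricc_prim_exp hT'0 hb ht]
    congr 1
    exact (intervalIntegral.integral_congr fun s _ => by rw [hFeq s]).symm
  -- G, H
  have hucF : IntegrableOn (fun s => uc s * riccF ub uc ξ s) (Set.Icc (0:ℝ) T') :=
    ricc_mul_right huc' hFc
  have hGc : ContinuousOn (riccG ub uc ξ) (Set.Icc (0:ℝ) T') :=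
    ricc_cont_primitive hT'0 hucF
  set H : ℝ → ℝ := fun t => 1 + y₀ * riccG ub uc ξ t with hHdef
  have hHc : ContinuousOn H (Set.Icc (0:ℝ) T') :=
    continuousOn_const.add (continuousOn_const.mul hGc)
  have hHne : ∀ t ∈ Set.Icc (0:ℝ) T', H t ≠ 0 := by
    intro t ht
    simp only [hHdef]
    exact hH t ht
  set w : ℝ → ℝ := fun t => y₀ * riccF ub uc ξ t / H t with hwdef
  have hwc : ContinuousOn w (Set.Icc (0:ℝ) T') :=
    (continuousOn_const.mul hFc).div hHc hHne
  have hyw : ∀ s : ℝ, riccY ub uc ξ y₀ s = ξ s + w s := by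
    intro s
    simp only [riccY, hwdef, hHdef]
  -- part 1
  have hξ0 : ξ 0 = 0 := by
    have := hξ 0 ⟨le_rfl, hT.le⟩
    simpa using this
  have part1 : riccY ub uc ξ y₀ 0 = y₀ := by
    have hF0 : riccF ub uc ξ 0 = 1 := by rw [hFeq]; simp
    have hG0 : riccG ub uc ξ 0 = 0 := by rw [riccG]; simp
    rw [riccY, hξ0, hF0, hG0]
    simp
  -- φ and W
  set φ : ℝ → ℝ := fun s => b s * w s - uc s * w s ^ 2 with hφdef
  have hφ : IntegrableOn φ (Set.Icc (0:ℝ) T') :=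
    (ricc_mul_right hb hwc).sub (ricc_mul_right huc' (hwc.pow 2))
  set W : ℝ → ℝ := fun t => y₀ + ∫ s in (0:ℝ)..t, φ s with hWdef
  have hWc : ContinuousOn W (Set.Icc (0:ℝ) T') :=
    continuousOn_const.add (ricc_cont_primitive hT'0 hφ)
  -- representation of H
  have hy₀ucF : IntegrableOn (fun s => y₀ * (uc s * riccF ub uc ξ s)) (Set.Icc (0:ℝ) T') :=
    hucF.const_mul y₀
  have hH_rep : ∀ u : ℝ, H u = 1 + ∫ s in (0:ℝ)..u, y₀ * (uc s * riccF ub uc ξ s) := by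
    intro u
    simp only [hHdef, riccG]
    rw [intervalIntegral.integral_const_mul]
  -- E and ψ
  set E : ℝ → ℝ := fun t => H t * W t - y₀ * riccF ub uc ξ t with hEdef
  have hEc : ContinuousOn E (Set.Icc (0:ℝ) T') :=
    (hHc.mul hWc).sub (continuousOn_const.mul hFc)
  set ψ : ℝ → ℝ := fun s => uc s * w s with hψdef
  have hψint : IntegrableOn ψ (Set.Icc (0:ℝ) T') := ricc_mul_right huc' hwc
  have hE_rep : ∀ t ∈ Set.Icc (0:ℝ) T', E t = ∫ s in (0:ℝ)..t, ψ s * E s := by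
    intro t ht
    have hHW := ricc_prp hT'0 hy₀ucF hφ 1 y₀ ht
    have hF2 : y₀ * riccF ub uc ξ t
        = y₀ + ∫ s in (0:ℝ)..t, y₀ * (b s * riccF ub uc ξ s) := by
      rw [intervalIntegral.integral_const_mul, hF_rep t ht]
      ring
    have estep : E t = (∫ s in (0:ℝ)..t,
          (y₀ * (uc s * riccF ub uc ξ s) * (y₀ + ∫ r in (0:ℝ)..s, φ r)
            + (1 + ∫ r in (0:ℝ)..s, y₀ * (uc r * riccF ub uc ξ r)) * φ s))
        - ∫ s in (0:ℝ)..t, y₀ * (b s * riccF ub uc ξ s) := by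
      have e1 : E t = H t * W t - y₀ * riccF ub uc ξ t := by simp only [hEdef]
      rw [e1, hH_rep t, hF2]
      simp only [hWdef]
      rw [hHW]
      ring
    have econv : ∀ s : ℝ, (y₀ * (uc s * riccF ub uc ξ s) * (y₀ + ∫ r in (0:ℝ)..s, φ r)
          + (1 + ∫ r in (0:ℝ)..s, y₀ * (uc r * riccF ub uc ξ r)) * φ s)
        = y₀ * (uc s * riccF ub uc ξ s) * W s + H s * φ s := by
      intro s
      rw [← hH_rep s]
    rw [intervalIntegral.integral_congr (fun s _ => econv s)] at estep
    have hiA : IntegrableOn (fun s => y₀ * (uc s * riccF ub uc ξ s) * W s + H s * φ s)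
        (Set.Icc (0:ℝ) T') :=
      (ricc_mul_right hy₀ucF hWc).add (ricc_mul_left hφ hHc)
    have hiB : IntegrableOn (fun s => y₀ * (b s * riccF ub uc ξ s)) (Set.Icc (0:ℝ) T') :=
      (ricc_mul_right hb hFc).const_mul y₀
    rw [← intervalIntegral.integral_sub (ricc_ii_of_icc hiA ht) (ricc_ii_of_icc hiB ht)]
      at estep
    rw [estep]
    refine intervalIntegral.integral_congr fun s hs => ?_
    have hs' : s ∈ Set.Icc (0:ℝ) T' := by
      rw [Set.uIcc_of_le ht.1] at hs
      exact ⟨hs.1, hs.2.trans ht.2⟩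
    have hHs : H s ≠ 0 := hHne s hs'
    simp only [hψdef, hEdef, hφdef, hwdef]
    field_simp
    ring
  have hE0 : ∀ t ∈ Set.Icc (0:ℝ) T', E t = 0 := fun t ht =>
    ricc_gronwall_zero hT'0 hψint hEc hE_rep ht
  have hWw : ∀ t ∈ Set.Icc (0:ℝ) T', W t = w t := by
    intro t ht
    have h0 := hE0 t ht
    have hHt : H t ≠ 0 := hHne t ht
    simp only [hEdef] at h0
    simp only [hwdef]
    field_simp
    linear_combination h0
  -- part 2
  have hint1 : IntegrableOn (fun s => ua s + 2 * ub s * ξ s - uc s * ξ s ^ 2)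
      (Set.Icc (0:ℝ) T') :=
    (hua'.add (ricc_mul_right (hub'.const_mul 2) hξc')).sub
      (ricc_mul_right huc' (hξc'.pow 2))
  have part2 : ∀ t ∈ Set.Icc (0:ℝ) T',
      riccY ub uc ξ y₀ t = y₀ + ∫ s in (0:ℝ)..t,
        (ua s + 2 * ub s * riccY ub uc ξ y₀ s - uc s * riccY ub uc ξ y₀ s ^ 2) := by
    intro t ht
    calc riccY ub uc ξ y₀ t = ξ t + w t := hyw t
      _ = (∫ s in (0:ℝ)..t, (ua s + 2 * ub s * ξ s - uc s * ξ s ^ 2)) + W t := by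
          rw [hξ t (hsub ht), ← hWw t ht]
      _ = y₀ + ((∫ s in (0:ℝ)..t, (ua s + 2 * ub s * ξ s - uc s * ξ s ^ 2))
            + ∫ s in (0:ℝ)..t, φ s) := by
          simp only [hWdef]; ring
      _ = y₀ + ∫ s in (0:ℝ)..t, ((ua s + 2 * ub s * ξ s - uc s * ξ s ^ 2) + φ s) := by
          rw [intervalIntegral.integral_add (ricc_ii_of_icc hint1 ht) (ricc_ii_of_icc hφ ht)]
      _ = y₀ + ∫ s in (0:ℝ)..t,
            (ua s + 2 * ub s * riccY ub uc ξ y₀ s - uc s * riccY ub uc ξ y₀ s ^ 2) := by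
          congr 1
          refine intervalIntegral.integral_congr fun s hs => ?_
          rw [hyw s]
          simp only [hφdef, hbdef]
          ring
  -- part 3
  have hYc : ContinuousOn (riccY ub uc ξ y₀) (Set.Icc (0:ℝ) T') := by
    have h := hξc'.add hwc
    exact h.congr fun s _ => hyw s
  have hρint : IntegrableOn (fun s =>
      ua s + 2 * ub s * riccY ub uc ξ y₀ s - uc s * riccY ub uc ξ y₀ s ^ 2)
      (Set.Icc (0:ℝ) T') :=
    (hua'.add (ricc_mul_right (hub'.const_mul 2) hYc)).sub
      (ricc_mul_right huc' (hYc.pow 2))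
  refine ⟨part1, part2, ?_⟩
  exact ricc_ae_hasDerivAt_restrict hT'pos hρint y₀ part2
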